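/- arXiv:2109.09721 — 5 statements merged into one kernel-verified Lean document; each statement's English description precedes it below -/
import Mathlib

section
/- Let f : ℝⁿ → ℝⁿ be continuously differentiable, let K be a real n×n matrix, and let m be an integer. Then f(exp(aK) z) = exp(m a K) f(z) for all a ∈ ℝ and all z ∈ ℝⁿ if and only if Df(z)(Kz) = m K f(z) for all z ∈ ℝⁿ, where Df(z) denotes the Jacobian of f at z. In particular (m = 1), f(exp(aK)z) = exp(aK) f(z) for all a, z if and only if J(z) Kz − K f(z) = 0 for all z. -/
open Matrix

attribute [local instance] Matrix.linftyOpNormedAddCommGroup Matrix.linftyOpNormedRing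
  Matrix.linftyOpNormedAlgebra

namespace LieEquivAux

/-- `mulVec` as a continuous bilinear map. -/
noncomputable def mvCLM (n : ℕ) :
    Matrix (Fin n) (Fin n) ℝ →L[ℝ] (Fin n → ℝ) →L[ℝ] (Fin n → ℝ) :=
  LinearMap.toContinuousLinearMap
  { toFun := fun M => LinearMap.toContinuousLinearMap M.mulVecLin
    map_add' := by
      intro M N; ext v i
      simp [Matrix.add_mulVec]
    map_smul' := by
      intro c M; ext v i
      simp [Matrix.smul_mulVec] }

@[simp] lemma mvCLM_apply (n : ℕ) (M : Matrix (Fin n) (Fin n) ℝ) (v : Fin n → ℝ) :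
    mvCLM n M v = M.mulVec v := rfl

lemma key (n : ℕ) (f : (Fin n → ℝ) → (Fin n → ℝ)) (hf : ContDiff ℝ 1 f)
    (K : Matrix (Fin n) (Fin n) ℝ) (c : ℝ) :
    (∀ (a : ℝ) (z : Fin n → ℝ),
        f ((NormedSpace.exp (a • K)).mulVec z)
          = (NormedSpace.exp ((c * a) • K)).mulVec (f z)) ↔
      (∀ z : Fin n → ℝ, fderiv ℝ f z (K.mulVec z) = c • K.mulVec (f z)) := by
  have hdf : Differentiable ℝ f := hf.differentiable one_ne_zero
  -- derivative of the flow `a ↦ exp(aK) z`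
  have hflow : ∀ (M : Matrix (Fin n) (Fin n) ℝ) (z : Fin n → ℝ) (t : ℝ),
      HasDerivAt (fun a : ℝ => (NormedSpace.exp (a • M)).mulVec z)
        ((NormedSpace.exp (t • M) * M).mulVec z) t := by
    intro M z t
    have h := ((mvCLM n).flip z).hasFDerivAt.comp_hasDerivAt t
      (hasDerivAt_exp_smul_const (𝕂 := ℝ) M t)
    exact h
  constructor
  · intro h z
    have h1 : HasDerivAt (fun a : ℝ => f ((NormedSpace.exp (a • K)).mulVec z))
        (fderiv ℝ f z (K.mulVec z)) 0 := by
      have he := hflow K z 0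
      rw [zero_smul, NormedSpace.exp_zero, one_mul] at he
      have hcomp := (hdf ((NormedSpace.exp ((0:ℝ) • K)).mulVec z)).hasFDerivAt.comp_hasDerivAt 0
        (by simpa [zero_smul, NormedSpace.exp_zero] using he :
          HasDerivAt (fun a : ℝ => (NormedSpace.exp (a • K)).mulVec z) (K.mulVec z) 0)
      simpa [Function.comp_def, zero_smul, NormedSpace.exp_zero] using hcomp
    have h2 : HasDerivAt (fun a : ℝ => (NormedSpace.exp ((c * a) • K)).mulVec (f z))
        (c • K.mulVec (f z)) 0 := by
      have hfun : (fun a : ℝ => (NormedSpace.exp ((c * a) • K)).mulVec (f z))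
          = fun a : ℝ => (NormedSpace.exp (a • (c • K))).mulVec (f z) := by
        funext a; rw [smul_smul, mul_comm]
      rw [hfun]
      have he := hflow (c • K) (f z) 0
      rw [zero_smul, NormedSpace.exp_zero, one_mul] at he
      simpa [Matrix.smul_mulVec] using he
    have heq : (fun a : ℝ => f ((NormedSpace.exp (a • K)).mulVec z))
        = fun a : ℝ => (NormedSpace.exp ((c * a) • K)).mulVec (f z) :=
      funext fun a => h a z
    rw [heq] at h1
    exact h1.unique h2
  · intro h a z
    set F : ℝ → (Fin n → ℝ) := fun a =>
      (NormedSpace.exp (a • (-(c • K)))).mulVec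
        (f ((NormedSpace.exp (a • K)).mulVec z)) with hF_def
    have hF : ∀ t : ℝ, HasDerivAt F 0 t := by
      intro t
      set w : Fin n → ℝ := (NormedSpace.exp (t • K)).mulVec z with hw
      have hcM : HasDerivAt (fun a : ℝ => mvCLM n (NormedSpace.exp (a • (-(c • K)))))
          (mvCLM n (NormedSpace.exp (t • (-(c • K))) * (-(c • K)))) t :=
        (mvCLM n).hasFDerivAt.comp_hasDerivAt t
          (hasDerivAt_exp_smul_const (𝕂 := ℝ) (-(c • K)) t)
      have hu : HasDerivAt (fun a : ℝ => f ((NormedSpace.exp (a • K)).mulVec z))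
          (fderiv ℝ f w ((NormedSpace.exp (t • K) * K).mulVec z)) t :=
        (hdf w).hasFDerivAt.comp_hasDerivAt t (hflow K z t)
      have hprod := hcM.clm_apply hu
      have hcomm : NormedSpace.exp (t • K) * K = K * NormedSpace.exp (t • K) :=
        (((Commute.refl K).smul_right t).exp_right).symm.eq
      have hKw : (NormedSpace.exp (t • K) * K).mulVec z = K.mulVec w := by
        rw [hcomm, ← Matrix.mulVec_mulVec]
      have hderiv0 :
          mvCLM n (NormedSpace.exp (t • (-(c • K))) * (-(c • K)))
              (f ((NormedSpace.exp (t • K)).mulVec z))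
            + mvCLM n (NormedSpace.exp (t • (-(c • K))))
              (fderiv ℝ f w ((NormedSpace.exp (t • K) * K).mulVec z)) = 0 := by
        rw [hKw, h w]
        simp only [mvCLM_apply, ← Matrix.mulVec_mulVec, ← hw]
        rw [Matrix.neg_mulVec, Matrix.smul_mulVec, ← Matrix.mulVec_add]
        simp
      rw [hderiv0] at hprod
      exact hprod
    have hdiff : Differentiable ℝ F := fun x => (hF x).differentiableAt
    have hzero : ∀ x : ℝ, fderiv ℝ F x = 0 := by
      intro x
      rw [(hF x).hasFDerivAt.fderiv]
      ext
      simp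
    have hc : F a = F 0 := is_const_of_fderiv_eq_zero hdiff hzero a 0
    have hF0 : F 0 = f z := by
      simp [hF_def, zero_smul, NormedSpace.exp_zero, Matrix.one_mulVec]
    rw [hF0] at hc
    have key1 : NormedSpace.exp ((c * a) • K) * NormedSpace.exp (a • (-(c • K))) = 1 := by
      rw [show a • (-(c • K)) = (-(c * a)) • K by
        rw [smul_neg, smul_smul, mul_comm, neg_smul]]
      rw [← Matrix.exp_add_of_commute _ _ (((Commute.refl K).smul_left _).smul_right _)]
      simp
    calc f ((NormedSpace.exp (a • K)).mulVec z)
        = (1 : Matrix (Fin n) (Fin n) ℝ).mulVec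
            (f ((NormedSpace.exp (a • K)).mulVec z)) := by rw [Matrix.one_mulVec]
      _ = (NormedSpace.exp ((c * a) • K) * NormedSpace.exp (a • (-(c • K)))).mulVec
            (f ((NormedSpace.exp (a • K)).mulVec z)) := by rw [key1]
      _ = (NormedSpace.exp ((c * a) • K)).mulVec (F a) := by
            rw [← Matrix.mulVec_mulVec]
      _ = (NormedSpace.exp ((c * a) • K)).mulVec (f z) := by rw [hc]

end LieEquivAux

/-- A continuously differentiable vector field `f : ℝⁿ → ℝⁿ` satisfies the Lie
equivariance condition `f(exp(aK) z) = exp(maK) f(z)` for all `a ∈ ℝ` and `z ∈ ℝⁿ`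
if and only if `Df(z)(Kz) = m K f(z)` for all `z`.  In particular (the case `m = 1`),
`f(exp(aK) z) = exp(aK) f(z)` for all `a, z` if and only if
`J(z) Kz − K f(z) = 0` for all `z`. -/
theorem lie_equivariance_iff_pde (n : ℕ)
    (f : (Fin n → ℝ) → (Fin n → ℝ)) (hf : ContDiff ℝ 1 f)
    (K : Matrix (Fin n) (Fin n) ℝ) (m : ℤ) :
    ((∀ (a : ℝ) (z : Fin n → ℝ),
        f ((NormedSpace.exp (a • K)).mulVec z)
          = (NormedSpace.exp (((m : ℝ) * a) • K)).mulVec (f z)) ↔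
      (∀ z : Fin n → ℝ, fderiv ℝ f z (K.mulVec z) = (m : ℝ) • K.mulVec (f z))) ∧
    ((∀ (a : ℝ) (z : Fin n → ℝ),
        f ((NormedSpace.exp (a • K)).mulVec z)
          = (NormedSpace.exp (a • K)).mulVec (f z)) ↔
      (∀ z : Fin n → ℝ, fderiv ℝ f z (K.mulVec z) - K.mulVec (f z) = 0)) := by
  constructor
  · exact LieEquivAux.key n f hf K (m : ℝ)
  · have h1 := LieEquivAux.key n f hf K 1
    simp only [one_mul, one_smul] at h1
    rw [h1]
    exact forall_congr' fun z => sub_eq_zero.symm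
end

section
/- Let f_x, f_p : ℝ^d × ℝ^d → ℝ^d be continuously differentiable and let K be a real d×d matrix. Then the pair (f_x, f_p) satisfies f_x(exp(θK)x, exp(−θKᵀ)p) = exp(−θKᵀ) f_x(x,p) and f_p(exp(θK)x, exp(−θKᵀ)p) = exp(θK) f_p(x,p) for all θ ∈ ℝ and all (x,p) if and only if, for all (x,p): D_x f_x(x,p)(Kx) − D_p f_x(x,p)(Kᵀp) + Kᵀ f_x(x,p) = 0 and D_x f_p(x,p)(Kx) − D_p f_p(x,p)(Kᵀp) − K f_p(x,p) = 0, where D_x and D_p denote the partial Jacobians with respect to the x and p variables. -/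
open Matrix

attribute [local instance] Matrix.linftyOpNormedAddCommGroup Matrix.linftyOpNormedSpace
  Matrix.linftyOpNormedRing Matrix.linftyOpNormedAlgebra

/-- `mulVec` as a continuous bilinear map. -/
noncomputable def mulVecCLM (d : ℕ) :
    Matrix (Fin d) (Fin d) ℝ →L[ℝ] (Fin d → ℝ) →L[ℝ] (Fin d → ℝ) :=
  LinearMap.toContinuousLinearMap
    { toFun := fun M => LinearMap.toContinuousLinearMap M.mulVecLin
      map_add' := by
        intro M N; ext v; simp [Matrix.add_mulVec]
      map_smul' := by
        intro c M; ext v; simp [Matrix.smul_mulVec] }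

lemma mulVecCLM_apply {d : ℕ} (M : Matrix (Fin d) (Fin d) ℝ) (v : Fin d → ℝ) :
    mulVecCLM d M v = M.mulVec v := rfl

/-- Derivative of `t ↦ exp(t A) *ᵥ u(t)`. -/
lemma hasDerivAt_exp_mulVec {d : ℕ} (A : Matrix (Fin d) (Fin d) ℝ)
    {u : ℝ → (Fin d → ℝ)} {u' : Fin d → ℝ} {θ : ℝ} (hu : HasDerivAt u u' θ) :
    HasDerivAt (fun t => (NormedSpace.exp (t • A)).mulVec (u t))
      (A.mulVec ((NormedSpace.exp (θ • A)).mulVec (u θ))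
        + (NormedSpace.exp (θ • A)).mulVec u') θ := by
  have hc : HasDerivAt (fun t : ℝ => mulVecCLM d (NormedSpace.exp (t • A)))
      (mulVecCLM d (NormedSpace.exp (θ • A) * A)) θ := by
    have := (mulVecCLM d).hasFDerivAt.comp_hasDerivAt θ (hasDerivAt_exp_smul_const A θ)
    exact this
  have h := hc.clm_apply hu
  have hcomm : NormedSpace.exp (θ • A) * A = A * NormedSpace.exp (θ • A) :=
    (((Commute.refl A).smul_left θ).exp_left).eq
  refine h.congr_deriv ?_
  simp only [mulVecCLM_apply]
  rw [hcomm, ← Matrix.mulVec_mulVec]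

lemma exp_neg_mul_exp' {d : ℕ} (A : Matrix (Fin d) (Fin d) ℝ) (θ : ℝ) :
    NormedSpace.exp ((-θ) • A) * NormedSpace.exp (θ • A) = 1 := by
  rw [← Matrix.exp_add_of_commute _ _ (((Commute.refl A).smul_right θ).smul_left (-θ)),
    ← add_smul]
  simp

lemma exp_mul_exp_neg' {d : ℕ} (A : Matrix (Fin d) (Fin d) ℝ) (θ : ℝ) :
    NormedSpace.exp (θ • A) * NormedSpace.exp ((-θ) • A) = 1 := by
  have := exp_neg_mul_exp' A (-θ)
  simpa using this

/-- Decomposition of the full Fréchet derivative into partial derivatives. -/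
lemma partial_fderiv_eq {E F : Type*} [NormedAddCommGroup E] [NormedSpace ℝ E]
    [NormedAddCommGroup F] [NormedSpace ℝ F] (H : E → E → F)
    (hH : Differentiable ℝ fun q : E × E => H q.1 q.2) (x p v w : E) :
    fderiv ℝ (fun q : E × E => H q.1 q.2) (x, p) (v, w)
      = fderiv ℝ (fun x' => H x' p) x v + fderiv ℝ (fun p' => H x p') p w := by
  have h1 : HasFDerivAt (fun x' => H x' p)
      ((fderiv ℝ (fun q : E × E => H q.1 q.2) (x, p)).comp (ContinuousLinearMap.inl ℝ E E)) x :=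
    ((hH (x, p)).hasFDerivAt.comp x (hasFDerivAt_prodMk_left (𝕜 := ℝ) x p) :)
  have h2 : HasFDerivAt (fun p' => H x p')
      ((fderiv ℝ (fun q : E × E => H q.1 q.2) (x, p)).comp (ContinuousLinearMap.inr ℝ E E)) p :=
    (hH (x, p)).hasFDerivAt.comp p (hasFDerivAt_prodMk_right (𝕜 := ℝ) x p)
  rw [h1.fderiv, h2.fderiv]
  have hvw : (v, w) = ((v, 0) + (0, w) : E × E) := by simp
  rw [hvw, map_add]
  rfl

/-- Canonical equivariance: the pair `(f_x, f_p)` of continuously differentiable maps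
`ℝ^d × ℝ^d → ℝ^d` satisfies
`f_x(exp(θK)x, exp(−θKᵀ)p) = exp(−θKᵀ) f_x(x,p)` and
`f_p(exp(θK)x, exp(−θKᵀ)p) = exp(θK) f_p(x,p)` for all `θ, x, p`
if and only if for all `(x,p)`:
`D_x f_x(x,p)(Kx) − D_p f_x(x,p)(Kᵀp) + Kᵀ f_x(x,p) = 0` and
`D_x f_p(x,p)(Kx) − D_p f_p(x,p)(Kᵀp) − K f_p(x,p) = 0`. -/
theorem canonical_equivariance_iff_pde (d : ℕ)
    (fx fp : (Fin d → ℝ) → (Fin d → ℝ) → (Fin d → ℝ))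
    (hfx : ContDiff ℝ 1 (fun q : (Fin d → ℝ) × (Fin d → ℝ) => fx q.1 q.2))
    (hfp : ContDiff ℝ 1 (fun q : (Fin d → ℝ) × (Fin d → ℝ) => fp q.1 q.2))
    (K : Matrix (Fin d) (Fin d) ℝ) :
    (∀ (θ : ℝ) (x p : Fin d → ℝ),
      fx ((NormedSpace.exp (θ • K)).mulVec x) ((NormedSpace.exp ((-θ) • Kᵀ)).mulVec p)
        = (NormedSpace.exp ((-θ) • Kᵀ)).mulVec (fx x p) ∧
      fp ((NormedSpace.exp (θ • K)).mulVec x) ((NormedSpace.exp ((-θ) • Kᵀ)).mulVec p)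
        = (NormedSpace.exp (θ • K)).mulVec (fp x p)) ↔
    (∀ (x p : Fin d → ℝ),
      fderiv ℝ (fun x' => fx x' p) x (K.mulVec x)
          - fderiv ℝ (fun p' => fx x p') p (Kᵀ.mulVec p)
          + Kᵀ.mulVec (fx x p) = 0 ∧
      fderiv ℝ (fun x' => fp x' p) x (K.mulVec x)
          - fderiv ℝ (fun p' => fp x p') p (Kᵀ.mulVec p)
          - K.mulVec (fp x p) = 0) := by
  classical
  have hF : Differentiable ℝ (fun q : (Fin d → ℝ) × (Fin d → ℝ) => fx q.1 q.2) :=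
    hfx.differentiable one_ne_zero
  have hG : Differentiable ℝ (fun q : (Fin d → ℝ) × (Fin d → ℝ) => fp q.1 q.2) :=
    hfp.differentiable one_ne_zero
  -- flow curves and their derivatives
  have hX : ∀ (x : Fin d → ℝ) (θ : ℝ),
      HasDerivAt (fun t : ℝ => (NormedSpace.exp (t • K)).mulVec x)
        (K.mulVec ((NormedSpace.exp (θ • K)).mulVec x)) θ := by
    intro x θ
    simpa using hasDerivAt_exp_mulVec K (hasDerivAt_const θ x)
  have hP : ∀ (p : Fin d → ℝ) (θ : ℝ),
      HasDerivAt (fun t : ℝ => (NormedSpace.exp ((-t) • Kᵀ)).mulVec p)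
        (-(Kᵀ.mulVec ((NormedSpace.exp ((-θ) • Kᵀ)).mulVec p))) θ := by
    intro p θ
    have hfun : (fun t : ℝ => (NormedSpace.exp ((-t) • Kᵀ)).mulVec p)
        = fun t : ℝ => (NormedSpace.exp (t • (-Kᵀ))).mulVec p := by
      funext t; rw [neg_smul, smul_neg]
    rw [hfun]
    have h := hasDerivAt_exp_mulVec (-Kᵀ) (hasDerivAt_const θ p)
    have hsm : θ • (-Kᵀ) = (-θ) • Kᵀ := by rw [neg_smul, smul_neg]
    rw [hsm] at h
    simpa [Matrix.neg_mulVec] using h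
  -- derivative of t ↦ H (X t) (P t)
  have hcurve : ∀ (H : (Fin d → ℝ) → (Fin d → ℝ) → (Fin d → ℝ)),
      Differentiable ℝ (fun q : (Fin d → ℝ) × (Fin d → ℝ) => H q.1 q.2) →
      ∀ (x p : Fin d → ℝ) (θ : ℝ),
      HasDerivAt (fun t : ℝ => H ((NormedSpace.exp (t • K)).mulVec x)
          ((NormedSpace.exp ((-t) • Kᵀ)).mulVec p))
        (fderiv ℝ (fun q : (Fin d → ℝ) × (Fin d → ℝ) => H q.1 q.2)
            ((NormedSpace.exp (θ • K)).mulVec x, (NormedSpace.exp ((-θ) • Kᵀ)).mulVec p)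
          (K.mulVec ((NormedSpace.exp (θ • K)).mulVec x),
           -(Kᵀ.mulVec ((NormedSpace.exp ((-θ) • Kᵀ)).mulVec p)))) θ := by
    intro H hH x p θ
    exact (hH _).hasFDerivAt.comp_hasDerivAt θ ((hX x θ).prodMk (hP p θ))
  have hexp0K : NormedSpace.exp ((0:ℝ) • K) = 1 := by simp [NormedSpace.exp_zero]
  have hexp0KT : NormedSpace.exp ((-(0:ℝ)) • Kᵀ) = 1 := by simp [NormedSpace.exp_zero]
  constructor
  · -- equivariance → PDE
    intro h x p
    constructor
    · -- fx part
      have hlhs := hcurve fx hF x p 0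
      simp only [hexp0K, hexp0KT, Matrix.one_mulVec] at hlhs
      have hrhs := hP (fx x p) 0
      simp only [hexp0KT, Matrix.one_mulVec] at hrhs
      have heq : (fun t : ℝ => fx ((NormedSpace.exp (t • K)).mulVec x)
          ((NormedSpace.exp ((-t) • Kᵀ)).mulVec p))
          = fun t : ℝ => (NormedSpace.exp ((-t) • Kᵀ)).mulVec (fx x p) :=
        funext fun t => (h t x p).1
      rw [heq] at hlhs
      have huniq := hlhs.unique hrhs
      rw [partial_fderiv_eq fx hF x p, map_neg] at huniq
      rw [sub_eq_add_neg, huniq, neg_add_cancel]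
    · -- fp part
      have hlhs := hcurve fp hG x p 0
      simp only [hexp0K, hexp0KT, Matrix.one_mulVec] at hlhs
      have hrhs := hX (fp x p) 0
      simp only [hexp0K, Matrix.one_mulVec] at hrhs
      have heq : (fun t : ℝ => fp ((NormedSpace.exp (t • K)).mulVec x)
          ((NormedSpace.exp ((-t) • Kᵀ)).mulVec p))
          = fun t : ℝ => (NormedSpace.exp (t • K)).mulVec (fp x p) :=
        funext fun t => (h t x p).2
      rw [heq] at hlhs
      have huniq := hlhs.unique hrhs
      rw [partial_fderiv_eq fp hG x p, map_neg] at huniq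
      rw [← huniq]; abel
  · -- PDE → equivariance
    intro h θ x p
    have hpde_x : ∀ (x' p' : Fin d → ℝ),
        fderiv ℝ (fun q : (Fin d → ℝ) × (Fin d → ℝ) => fx q.1 q.2) (x', p')
            (K.mulVec x', -(Kᵀ.mulVec p')) = -(Kᵀ.mulVec (fx x' p')) := by
      intro x' p'
      have h1 := (h x' p').1
      rw [partial_fderiv_eq fx hF x' p', map_neg]
      rw [sub_eq_add_neg] at h1
      exact eq_neg_of_add_eq_zero_left h1
    have hpde_p : ∀ (x' p' : Fin d → ℝ),
        fderiv ℝ (fun q : (Fin d → ℝ) × (Fin d → ℝ) => fp q.1 q.2) (x', p')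
            (K.mulVec x', -(Kᵀ.mulVec p')) = K.mulVec (fp x' p') := by
      intro x' p'
      have h1 := (h x' p').2
      rw [sub_eq_zero] at h1
      rw [partial_fderiv_eq fp hG x' p', map_neg, ← sub_eq_add_neg]
      exact h1
    constructor
    · -- fx part: t ↦ exp(t Kᵀ) *ᵥ fx (X t) (P t) is constant
      have hΦderiv : ∀ t : ℝ, HasDerivAt (fun t : ℝ =>
          (NormedSpace.exp (t • Kᵀ)).mulVec (fx ((NormedSpace.exp (t • K)).mulVec x)
            ((NormedSpace.exp ((-t) • Kᵀ)).mulVec p))) 0 t := by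
        intro t
        have hc := hcurve fx hF x p t
        have hd := hasDerivAt_exp_mulVec Kᵀ hc
        rw [hpde_x _ _] at hd
        have hz : Kᵀ.mulVec ((NormedSpace.exp (t • Kᵀ)).mulVec
              (fx ((NormedSpace.exp (t • K)).mulVec x)
                ((NormedSpace.exp ((-t) • Kᵀ)).mulVec p)))
            + (NormedSpace.exp (t • Kᵀ)).mulVec
              (-(Kᵀ.mulVec (fx ((NormedSpace.exp (t • K)).mulVec x)
                ((NormedSpace.exp ((-t) • Kᵀ)).mulVec p)))) = 0 := by
          rw [Matrix.mulVec_neg, Matrix.mulVec_mulVec, Matrix.mulVec_mulVec,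
            (((Commute.refl Kᵀ).smul_left t).exp_left).eq]
          exact add_neg_cancel _
        rw [hz] at hd
        exact hd
      have hΦdiff : Differentiable ℝ (fun t : ℝ =>
          (NormedSpace.exp (t • Kᵀ)).mulVec (fx ((NormedSpace.exp (t • K)).mulVec x)
            ((NormedSpace.exp ((-t) • Kᵀ)).mulVec p))) :=
        fun t => (hΦderiv t).differentiableAt
      have hΦconst := is_const_of_fderiv_eq_zero hΦdiff
        (fun t => by rw [(hΦderiv t).hasFDerivAt.fderiv]; ext v; simp) θ 0
      simp only [hexp0K, hexp0KT, zero_smul, NormedSpace.exp_zero, Matrix.one_mulVec] at hΦconst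
      -- hΦconst : exp(θKᵀ) *ᵥ fx (Xθ) (Pθ) = fx x p
      have := congrArg (fun v => (NormedSpace.exp ((-θ) • Kᵀ)).mulVec v) hΦconst
      rwa [Matrix.mulVec_mulVec, exp_neg_mul_exp', Matrix.one_mulVec] at this
    · -- fp part
      have hΨderiv : ∀ t : ℝ, HasDerivAt (fun t : ℝ =>
          (NormedSpace.exp (t • (-K))).mulVec (fp ((NormedSpace.exp (t • K)).mulVec x)
            ((NormedSpace.exp ((-t) • Kᵀ)).mulVec p))) 0 t := by
        intro t
        have hc := hcurve fp hG x p t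
        have hd := hasDerivAt_exp_mulVec (-K) hc
        rw [hpde_p _ _] at hd
        have hz : (-K).mulVec ((NormedSpace.exp (t • (-K))).mulVec
              (fp ((NormedSpace.exp (t • K)).mulVec x)
                ((NormedSpace.exp ((-t) • Kᵀ)).mulVec p)))
            + (NormedSpace.exp (t • (-K))).mulVec
              (K.mulVec (fp ((NormedSpace.exp (t • K)).mulVec x)
                ((NormedSpace.exp ((-t) • Kᵀ)).mulVec p))) = 0 := by
          rw [Matrix.neg_mulVec, Matrix.mulVec_mulVec, Matrix.mulVec_mulVec,
            ((((Commute.refl K).neg_left).smul_left t).exp_left).eq]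
          exact neg_add_cancel _
        rw [hz] at hd
        exact hd
      have hΨdiff : Differentiable ℝ (fun t : ℝ =>
          (NormedSpace.exp (t • (-K))).mulVec (fp ((NormedSpace.exp (t • K)).mulVec x)
            ((NormedSpace.exp ((-t) • Kᵀ)).mulVec p))) :=
        fun t => (hΨderiv t).differentiableAt
      have hΨconst := is_const_of_fderiv_eq_zero hΨdiff
        (fun t => by rw [(hΨderiv t).hasFDerivAt.fderiv]; ext v; simp) θ 0
      simp only [hexp0K, hexp0KT, zero_smul, NormedSpace.exp_zero, Matrix.one_mulVec] at hΨconst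
      -- hΨconst : exp(θ•(-K)) *ᵥ fp (Xθ) (Pθ) = fp x p
      have := congrArg (fun v => (NormedSpace.exp (θ • K)).mulVec v) hΨconst
      have hsm : θ • (-K) = (-θ) • K := by rw [neg_smul, smul_neg]
      rw [hsm] at this
      rwa [Matrix.mulVec_mulVec, exp_mul_exp_neg', Matrix.one_mulVec] at this
end

section
/- Let m₁, m₂, g, l > 0, set A = (m₁+m₂)g/(m₁ l), B = m₂ g/(m₁ l), a = √((m₁+m₂)/m₂), and ω±² = A(1 ± √(m₂/(m₁+m₂))). Let θ₊, θ₋ : ℝ → ℝ be twice differentiable and define θ₁ = −θ₊ + θ₋ and θ₂ = a(θ₊ + θ₋). Then (θ₁, θ₂) satisfies the linearized double-pendulum equations θ̈₁ = −A θ₁ + B θ₂ and θ̈₂ = A θ₁ − A θ₂ for all t if and only if θ̈₊ = −ω₊² θ₊ and θ̈₋ = −ω₋² θ₋ for all t. -/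
/-- Example D (linearized double pendulum): with `A = (m₁+m₂)g/(m₁l)`,
`B = m₂g/(m₁l)`, `a = √((m₁+m₂)/m₂)`, `ω±² = A(1 ± √(m₂/(m₁+m₂)))`, and the
change of variables `θ₁ = −θ₊ + θ₋`, `θ₂ = a(θ₊ + θ₋)`, the pair `(θ₁, θ₂)`
satisfies the linearized double-pendulum equations `θ̈₁ = −Aθ₁ + Bθ₂`,
`θ̈₂ = Aθ₁ − Aθ₂` for all `t` if and only if the normal modes decouple:
`θ̈₊ = −ω₊²θ₊` and `θ̈₋ = −ω₋²θ₋` for all `t`. -/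
theorem double_pendulum_normal_modes
    (m₁ m₂ g l : ℝ) (hm₁ : 0 < m₁) (hm₂ : 0 < m₂) (hg : 0 < g) (hl : 0 < l)
    (A B a ωp2 ωm2 : ℝ)
    (hA : A = (m₁ + m₂) * g / (m₁ * l))
    (hB : B = m₂ * g / (m₁ * l))
    (ha : a = Real.sqrt ((m₁ + m₂) / m₂))
    (hωp : ωp2 = A * (1 + Real.sqrt (m₂ / (m₁ + m₂))))
    (hωm : ωm2 = A * (1 - Real.sqrt (m₂ / (m₁ + m₂))))
    (θp θm : ℝ → ℝ)
    (hθp : Differentiable ℝ θp) (hθp' : Differentiable ℝ (deriv θp))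
    (hθm : Differentiable ℝ θm) (hθm' : Differentiable ℝ (deriv θm))
    (θ₁ θ₂ : ℝ → ℝ)
    (hθ₁ : ∀ t, θ₁ t = -θp t + θm t)
    (hθ₂ : ∀ t, θ₂ t = a * (θp t + θm t)) :
    ((∀ t, deriv (deriv θ₁) t = -A * θ₁ t + B * θ₂ t) ∧
     (∀ t, deriv (deriv θ₂) t = A * θ₁ t - A * θ₂ t)) ↔
    ((∀ t, deriv (deriv θp) t = -ωp2 * θp t) ∧
     (∀ t, deriv (deriv θm) t = -ωm2 * θm t)) := by
  set s : ℝ := Real.sqrt (m₂ / (m₁ + m₂)) with hsdef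
  -- key algebraic identities
  have hs2 : s ^ 2 = m₂ / (m₁ + m₂) := Real.sq_sqrt (by positivity)
  have hprod : ((m₁ + m₂) / m₂) * (m₂ / (m₁ + m₂)) = 1 := by
    field_simp
  have has : a * s = 1 := by
    rw [ha, hsdef, ← Real.sqrt_mul (by positivity), hprod, Real.sqrt_one]
  have hB' : B = A * s ^ 2 := by
    rw [hA, hB, hs2]
    field_simp
  have hBa : B * a = A * s := by
    rw [hB']; linear_combination A * s * has
  -- second derivatives
  have e1 : θ₁ = fun t => -θp t + θm t := funext hθ₁
  have e2 : θ₂ = fun t => a * (θp t + θm t) := funext hθ₂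
  have dθ₁ : deriv θ₁ = fun t => -deriv θp t + deriv θm t := by
    rw [e1]; ext t
    rw [deriv_fun_add (f := fun y => -θp y) ((hθp t).neg) (hθm t), deriv.fun_neg]
  have dθ₁' : deriv (deriv θ₁) = fun t => -deriv (deriv θp) t + deriv (deriv θm) t := by
    rw [dθ₁]; ext t
    rw [deriv_fun_add (f := fun y => -deriv θp y) ((hθp' t).neg) (hθm' t), deriv.fun_neg]
  have dθ₂ : deriv θ₂ = fun t => a * (deriv θp t + deriv θm t) := by
    rw [e2]; ext t
    rw [deriv_const_mul (d := fun y => θp y + θm y) a ((hθp t).add (hθm t)), deriv_fun_add (hθp t) (hθm t)]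
  have dθ₂' : deriv (deriv θ₂) = fun t => a * (deriv (deriv θp) t + deriv (deriv θm) t) := by
    rw [dθ₂]; ext t
    rw [deriv_const_mul (d := fun y => deriv θp y + deriv θm y) a ((hθp' t).add (hθm' t)), deriv_fun_add (hθp' t) (hθm' t)]
  simp only [dθ₁', dθ₂', hθ₁, hθ₂, hωp, hωm]
  constructor
  · rintro ⟨h1, h2⟩
    refine ⟨fun t => ?_, fun t => ?_⟩
    all_goals {
      have E1 := h1 t
      have E2 := h2 t
      have E2' : deriv (deriv θp) t + deriv (deriv θm) t
          = s * (A * (-θp t + θm t)) - A * (θp t + θm t) := by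
        linear_combination s * E2
          - (deriv (deriv θp) t + deriv (deriv θm) t + A * (θp t + θm t)) * has
      have E1' : -deriv (deriv θp) t + deriv (deriv θm) t
          = A * (θp t - θm t) + A * s * (θp t + θm t) := by
        linear_combination E1 + (θp t + θm t) * hBa
      first
      | linear_combination (E2' - E1') / 2
      | linear_combination (E1' + E2') / 2
    }
  · rintro ⟨hp, hm⟩
    refine ⟨fun t => ?_, fun t => ?_⟩
    · linear_combination -hp t + hm t - (θp t + θm t) * hBa
    · linear_combination a * hp t + a * hm t - A * (θp t - θm t) * has
end

section
/- Let M > 0 and let U = {(t,x,y,z) ∈ ℝ⁴ : r > 2M} with r = √(x²+y²+z²). Define Φ : U → ℝ⁴ by Φ(t,x,y,z) = (t + 2M[2u + ln((u−1)/(u+1))], x, y, z), where u = √(r/(2M)). Let g_Sch(t,x,y,z) be the 4×4 matrix with entries (g_Sch)₀₀ = 1 − 2M/r, (g_Sch)₀ᵢ = 0, (g_Sch)ᵢⱼ = −δᵢⱼ − 2M xᵢxⱼ/((r−2M)r²), and let g_GP(t,x,y,z) be the 4×4 matrix with entries (g_GP)₀₀ = 1 − 2M/r, (g_GP)₀ᵢ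 = (g_GP)ᵢ₀ = −√(2M/r)·xᵢ/r, (g_GP)ᵢⱼ = −δᵢⱼ, for spatial indices i,j ∈ {1,2,3} with (x₁,x₂,x₃) = (x,y,z). Then for every w ∈ U, (DΦ(w))ᵀ g_GP(Φ(w)) (DΦ(w)) = g_Sch(w), where DΦ(w) is the 4×4 Jacobian matrix of Φ at w. -/
open Matrix

/-- The spatial radius `r = √(x² + y² + z²)` of a spacetime point
(coordinate `0` is time, coordinates `1,2,3` are spatial). -/
noncomputable def spatialRad (w : Fin 4 → ℝ) : ℝ :=
  Real.sqrt (w 1 ^ 2 + w 2 ^ 2 + w 3 ^ 2)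

/-- The Gullstrand–Painlevé time transformation
`Φ(t,x,y,z) = (t + 2M[2u + ln((u−1)/(u+1))], x, y, z)` with `u = √(r/2M)`. -/
noncomputable def PhiGP (M : ℝ) (w : Fin 4 → ℝ) : Fin 4 → ℝ :=
  ![w 0 + 2 * M * (2 * Real.sqrt (spatialRad w / (2 * M)) +
      Real.log ((Real.sqrt (spatialRad w / (2 * M)) - 1) /
                (Real.sqrt (spatialRad w / (2 * M)) + 1))),
    w 1, w 2, w 3]

/-- The Schwarzschild metric in Cartesian spatial coordinates:
`g₀₀ = 1 − 2M/r`, `g₀ᵢ = gᵢ₀ = 0`, `gᵢⱼ = −δᵢⱼ − 2Mxᵢxⱼ/((r−2M)r²)`. -/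
noncomputable def gSch (M : ℝ) (w : Fin 4 → ℝ) : Matrix (Fin 4) (Fin 4) ℝ :=
  Matrix.of fun i j =>
    if i = 0 ∧ j = 0 then 1 - 2 * M / spatialRad w
    else if i = 0 ∨ j = 0 then 0
    else -(if i = j then (1 : ℝ) else 0)
      - 2 * M * w i * w j / ((spatialRad w - 2 * M) * spatialRad w ^ 2)

/-- The Gullstrand–Painlevé metric:
`g₀₀ = 1 − 2M/r`, `g₀ᵢ = gᵢ₀ = −√(2M/r)·xᵢ/r`, `gᵢⱼ = −δᵢⱼ`. -/
noncomputable def gGP (M : ℝ) (w : Fin 4 → ℝ) : Matrix (Fin 4) (Fin 4) ℝ :=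
  Matrix.of fun i j =>
    if i = 0 ∧ j = 0 then 1 - 2 * M / spatialRad w
    else if i = 0 then -Real.sqrt (2 * M / spatialRad w) * w j / spatialRad w
    else if j = 0 then -Real.sqrt (2 * M / spatialRad w) * w i / spatialRad w
    else -(if i = j then (1 : ℝ) else 0)

/-- The Jacobian matrix `DΦ(w)` of a map `Φ : ℝ⁴ → ℝ⁴`. -/
noncomputable def jacobianMatrix (Φ : (Fin 4 → ℝ) → (Fin 4 → ℝ)) (w : Fin 4 → ℝ) :
    Matrix (Fin 4) (Fin 4) ℝ :=
  Matrix.of fun i j => fderiv ℝ (fun v => Φ v i) w (Pi.single j 1)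


noncomputable def Ftime (M r : ℝ) : ℝ :=
  2 * M * (2 * Real.sqrt (r / (2 * M)) +
    Real.log ((Real.sqrt (r / (2 * M)) - 1) / (Real.sqrt (r / (2 * M)) + 1)))

lemma hasDerivAt_Ftime (M r : ℝ) (hM : 0 < M) (hr : 2 * M < r) :
    HasDerivAt (Ftime M) (Real.sqrt (2 * M / r) * r / (r - 2 * M)) r := by
  have h2M : (0:ℝ) < 2 * M := by linarith
  have hrpos : (0:ℝ) < r := by linarith
  set u := Real.sqrt (r / (2 * M)) with hu_def
  have hu1 : 1 < u := by
    rw [hu_def, show (1:ℝ) = Real.sqrt 1 by simp]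
    apply Real.sqrt_lt_sqrt (by norm_num)
    rw [lt_div_iff₀ h2M]; linarith
  have hupos : 0 < u := by linarith
  have hu2 : u ^ 2 = r / (2 * M) := Real.sq_sqrt (by positivity)
  have hdu : HasDerivAt (fun x => Real.sqrt (x / (2 * M))) (1 / (2 * u) * (1 / (2 * M))) r := by
    have h1 : HasDerivAt (fun x : ℝ => x / (2 * M)) (1 / (2 * M)) r := by
      simpa using (hasDerivAt_id r).div_const (2 * M)
    have h2 : HasDerivAt Real.sqrt (1 / (2 * Real.sqrt (r / (2 * M)))) (r / (2 * M)) :=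
      Real.hasDerivAt_sqrt (by positivity)
    simpa [hu_def, Function.comp_def] using h2.comp r h1
  have hq : HasDerivAt (fun x => (Real.sqrt (x / (2 * M)) - 1) / (Real.sqrt (x / (2 * M)) + 1))
      (((1 / (2 * u) * (1 / (2 * M))) * (u + 1) - (u - 1) * (1 / (2 * u) * (1 / (2 * M)))) / (u + 1) ^ 2) r := by
    exact (hdu.sub_const 1).div (hdu.add_const 1)
      (by positivity : (0:ℝ) < Real.sqrt (r / (2*M)) + 1).ne'
  have hqpos : 0 < (u - 1) / (u + 1) := div_pos (by linarith) (by linarith)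
  have hlog : HasDerivAt (fun x => Real.log ((Real.sqrt (x / (2 * M)) - 1) / (Real.sqrt (x / (2 * M)) + 1)))
      (((1 / (2 * u) * (1 / (2 * M))) * (u + 1) - (u - 1) * (1 / (2 * u) * (1 / (2 * M)))) / (u + 1) ^ 2
        / ((u - 1) / (u + 1))) r := by
    simpa [div_eq_mul_inv, mul_comm, Function.comp_def] using
      (Real.hasDerivAt_log (ne_of_gt hqpos)).comp r hq
  have hF : HasDerivAt (Ftime M)
      (2 * M * (2 * (1 / (2 * u) * (1 / (2 * M))) +
        ((1 / (2 * u) * (1 / (2 * M))) * (u + 1) - (u - 1) * (1 / (2 * u) * (1 / (2 * M)))) / (u + 1) ^ 2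
        / ((u - 1) / (u + 1)))) r := by
    exact ((hdu.const_mul 2).add hlog).const_mul (2 * M)
  convert hF using 1
  have hs : Real.sqrt (2 * M / r) * u = 1 := by
    rw [← Real.sqrt_mul (by positivity),
      show 2 * M / r * (r / (2 * M)) = 1 by field_simp]
    simp
  have hu1' : u - 1 ≠ 0 := by linarith
  have hu1'' : u + 1 ≠ 0 := by positivity
  have hr2M : r - 2 * M ≠ 0 := by linarith
  have hMne : M ≠ 0 := ne_of_gt hM
  have hune : u ≠ 0 := ne_of_gt hupos
  have hu2' : u ^ 2 * (2 * M) = r := by rw [hu2]; field_simp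
  rw [show Real.sqrt (2 * M / r) = 1 / u from by rw [eq_div_iff hune]; exact hs]
  field_simp
  linear_combination 2 * hu2'

noncomputable def sProj (j : Fin 4) : (Fin 4 → ℝ) →L[ℝ] ℝ := ContinuousLinearMap.proj j

lemma hasFDerivAt_coord (j : Fin 4) (w : Fin 4 → ℝ) :
    HasFDerivAt (fun v : Fin 4 → ℝ => v j) (sProj j) w :=
  (ContinuousLinearMap.proj j : (Fin 4 → ℝ) →L[ℝ] ℝ).hasFDerivAt

lemma hasFDerivAt_spatialRad (w : Fin 4 → ℝ) (hw : 0 < spatialRad w) :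
    HasFDerivAt spatialRad
      ((spatialRad w)⁻¹ • (w 1 • sProj 1 + w 2 • sProj 2 + w 3 • sProj 3)) w := by
  have hsr : ∀ v : Fin 4 → ℝ, spatialRad v = Real.sqrt (v 1 ^ 2 + v 2 ^ 2 + v 3 ^ 2) :=
    fun _ => rfl
  have hq : (0:ℝ) < w 1 ^ 2 + w 2 ^ 2 + w 3 ^ 2 := Real.sqrt_pos.mp (by rw [← hsr]; exact hw)
  have hqd : HasFDerivAt (fun v : Fin 4 → ℝ => v 1 ^ 2 + v 2 ^ 2 + v 3 ^ 2)
      (w 1 • sProj 1 + w 1 • sProj 1 + (w 2 • sProj 2 + w 2 • sProj 2)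
        + (w 3 • sProj 3 + w 3 • sProj 3)) w := by
    simp only [pow_two]
    exact (((hasFDerivAt_coord 1 w).mul (hasFDerivAt_coord 1 w)).add
      ((hasFDerivAt_coord 2 w).mul (hasFDerivAt_coord 2 w))).add
      ((hasFDerivAt_coord 3 w).mul (hasFDerivAt_coord 3 w))
  have h := (Real.hasDerivAt_sqrt hq.ne').comp_hasFDerivAt w hqd
  have hfun : spatialRad = (Real.sqrt ∘ fun v : Fin 4 → ℝ => v 1 ^ 2 + v 2 ^ 2 + v 3 ^ 2) := by
    funext v; exact hsr v
  rw [hfun]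
  refine h.congr_fderiv ?_
  ext v
  have h0 : Real.sqrt (w 1 ^ 2 + w 2 ^ 2 + w 3 ^ 2) ≠ 0 := by positivity
  simp [hsr]
  field_simp
  ring

lemma hasFDerivAt_time (M : ℝ) (w : Fin 4 → ℝ) (hM : 0 < M) (hr : 2 * M < spatialRad w) :
    HasFDerivAt (fun v => PhiGP M v 0)
      (sProj 0 + (Real.sqrt (2 * M / spatialRad w) / (spatialRad w - 2 * M)) •
        (w 1 • sProj 1 + w 2 • sProj 2 + w 3 • sProj 3)) w := by
  have hrpos : 0 < spatialRad w := lt_trans (by positivity) hr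
  have h1 : (fun v => PhiGP M v 0) = fun v : Fin 4 → ℝ => v 0 + Ftime M (spatialRad v) := by
    funext v
    simp [PhiGP, Ftime]
  rw [h1]
  have h2 := (hasDerivAt_Ftime M (spatialRad w) hM hr).comp_hasFDerivAt w
    (hasFDerivAt_spatialRad w hrpos)
  have h3 := (hasFDerivAt_coord 0 w).add h2
  refine h3.congr_fderiv ?_
  ext v
  have h0 : spatialRad w ≠ 0 := ne_of_gt hrpos
  have h4 : spatialRad w - 2 * M ≠ 0 := by linarith
  simp
  field_simp

lemma jacobian_eq (M : ℝ) (w : Fin 4 → ℝ) (hM : 0 < M) (hr : 2 * M < spatialRad w) :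
    jacobianMatrix (PhiGP M) w = Matrix.of fun i j =>
      if i = 0 then
        (if j = 0 then 1 else Real.sqrt (2 * M / spatialRad w) / (spatialRad w - 2 * M) * w j)
      else if (i : Fin 4) = j then 1 else 0 := by
  ext i j
  fin_cases i <;>
    simp only [Fin.isValue, Fin.zero_eta, Fin.mk_one, Fin.reduceFinMk]
  · simp only [jacobianMatrix, Matrix.of_apply]
    rw [(hasFDerivAt_time M w hM hr).fderiv]
    fin_cases j <;>
      simp [sProj, ContinuousLinearMap.proj, Pi.single_apply]
  · have h : (fun v => PhiGP M v 1) = fun v : Fin 4 → ℝ => v 1 := by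
      funext v; simp [PhiGP]
    simp only [jacobianMatrix, Matrix.of_apply]
    rw [h, (hasFDerivAt_coord 1 w).fderiv]
    fin_cases j <;> simp [sProj, ContinuousLinearMap.proj, Pi.single_apply]
  · have h : (fun v => PhiGP M v 2) = fun v : Fin 4 → ℝ => v 2 := by
      funext v; simp [PhiGP]
    simp only [jacobianMatrix, Matrix.of_apply]
    rw [h, (hasFDerivAt_coord 2 w).fderiv]
    fin_cases j <;> simp [sProj, ContinuousLinearMap.proj, Pi.single_apply]
  · have h : (fun v => PhiGP M v 3) = fun v : Fin 4 → ℝ => v 3 := by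
      funext v; simp [PhiGP]
    simp only [jacobianMatrix, Matrix.of_apply]
    rw [h, (hasFDerivAt_coord 3 w).fderiv]
    fin_cases j <;> simp [sProj, ContinuousLinearMap.proj, Pi.single_apply]

lemma PhiGP_apply_one (M : ℝ) (w : Fin 4 → ℝ) : PhiGP M w 1 = w 1 := rfl
lemma PhiGP_apply_two (M : ℝ) (w : Fin 4 → ℝ) : PhiGP M w 2 = w 2 := rfl
lemma PhiGP_apply_three (M : ℝ) (w : Fin 4 → ℝ) : PhiGP M w 3 = w 3 := rfl

lemma spatialRad_PhiGP (M : ℝ) (w : Fin 4 → ℝ) : spatialRad (PhiGP M w) = spatialRad w := by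
  simp [spatialRad, PhiGP]

lemma gGP_PhiGP (M : ℝ) (w : Fin 4 → ℝ) : gGP M (PhiGP M w) = gGP M w := by
  ext i j
  fin_cases i <;> fin_cases j <;>
    simp [gGP, spatialRad_PhiGP, PhiGP_apply_one, PhiGP_apply_two, PhiGP_apply_three]

set_option maxHeartbeats 1000000 in
/-- Example F: outside the horizon (`r > 2M`), the pullback of the
Gullstrand–Painlevé metric under the Gullstrand–Painlevé time transformation
equals the Schwarzschild metric:
`(DΦ(w))ᵀ g_GP(Φ(w)) (DΦ(w)) = g_Sch(w)` for every `w` with `r(w) > 2M`. -/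
theorem schwarzschild_is_GP_pullback (M : ℝ) (hM : 0 < M) :
    ∀ w : Fin 4 → ℝ, 2 * M < spatialRad w →
      (jacobianMatrix (PhiGP M) w)ᵀ * gGP M (PhiGP M w) * jacobianMatrix (PhiGP M) w
        = gSch M w := by
  intro w hr
  have hrpos : 0 < spatialRad w := lt_trans (by positivity) hr
  have hs2 : (Real.sqrt (2 * M / spatialRad w)) ^ 2 = 2 * M / spatialRad w :=
    Real.sq_sqrt (by positivity)
  have h0 : spatialRad w ≠ 0 := ne_of_gt hrpos
  have h4 : spatialRad w - 2 * M ≠ 0 := by linarith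
  rw [gGP_PhiGP, jacobian_eq M w hM hr]
  ext i j
  fin_cases i <;> fin_cases j <;>
    simp only [Matrix.mul_apply, Fin.sum_univ_four, Matrix.transpose_apply, Matrix.of_apply,
      gGP, gSch, Fin.isValue, Fin.zero_eta, Fin.mk_one, Fin.reduceFinMk,
      Fin.reduceEq, reduceIte, ite_true, ite_false, and_true, true_and, and_false, false_and,
      or_true, true_or, or_false, false_or, one_mul, mul_one, zero_mul, mul_zero,
      add_zero, zero_add]
  all_goals (
    generalize hgen : Real.sqrt (2 * M / spatialRad w) = s at hs2 ⊢
    field_simp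
    try ring_nf
    try rw [hs2]
    try field_simp
    try ring)
end

section
/- Let c₁, c₂, c₃ : ℝ → ℝ be differentiable. (1) If x, p : ℝ → ℝ are differentiable with ẋ = p and ṗ = 0, then the curves x'(t) = c₁(p(t))x(t) + c₂(p(t)) and p'(t) = c₃(p(t)) satisfy ṗ'(t) = 0 and ẋ'(t) = c₁(p(t))·p(t), which is constant in t; in particular (x', p') again describes uniform motion with constant velocity. (2) For any differentiable A : ℝ → ℝ, the vector field f(x,p) = (A(p), 0) on ℝ² satisfies both the Hamiltonicity condition MJ + JᵀM = 0, where J is the Jacobian of f and M = [[0,1],[−1,0]], and the translational-invariance condition ∂f/∂x = 0. -/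
open Matrix

/-- The vector field `f(x,p) = (A(p), 0)` on ℝ² (phase-space coordinates `(x,p)`). -/
noncomputable def freeField (A : ℝ → ℝ) : (Fin 2 → ℝ) → (Fin 2 → ℝ) :=
  fun w => ![A (w 1), 0]

/-- The Jacobian matrix of a vector field on ℝ². -/
noncomputable def jac2 (f : (Fin 2 → ℝ) → (Fin 2 → ℝ)) (z : Fin 2 → ℝ) :
    Matrix (Fin 2) (Fin 2) ℝ :=
  Matrix.of fun i j => fderiv ℝ (fun w => f w i) z (Pi.single j 1)


lemma fderiv_comp_eval (A : ℝ → ℝ) (hA : Differentiable ℝ A) (z : Fin 2 → ℝ)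
    (v : Fin 2 → ℝ) :
    fderiv ℝ (fun w : Fin 2 → ℝ => A (w 1)) z v = deriv A (z 1) * v 1 := by
  have h : fderiv ℝ (fun w : Fin 2 → ℝ => A (w 1)) z =
      (fderiv ℝ A (z 1)).comp (ContinuousLinearMap.proj 1) := by
    have := fderiv_comp (𝕜 := ℝ) (x := z) (hA.differentiableAt)
      ((ContinuousLinearMap.proj (R := ℝ) (φ := fun _ : Fin 2 => ℝ) 1).differentiableAt)
    simpa [ContinuousLinearMap.fderiv, Function.comp_def] using this
  rw [h]
  simp [ContinuousLinearMap.proj, mul_comm]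

lemma jac2_freeField (A : ℝ → ℝ) (hA : Differentiable ℝ A) (z : Fin 2 → ℝ) :
    jac2 (freeField A) z = !![0, deriv A (z 1); 0, 0] := by
  ext i j
  fin_cases i <;> fin_cases j <;>
    simp [jac2, freeField, fderiv_comp_eval A hA, fderiv_const]

/-- Underconstrained transformations for 1D uniform motion (Appendix E):
(1) if `ẋ = p` and `ṗ = 0`, then for differentiable `c₁, c₂, c₃` the transformed
curves `x' = c₁(p)x + c₂(p)`, `p' = c₃(p)` satisfy `ṗ' = 0` and
`ẋ' = c₁(p)·p`, which is constant in `t` — uniform motion with constant velocity;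
(2) for any differentiable `A`, the vector field `f(x,p) = (A(p), 0)` satisfies
both the Hamiltonicity condition `MJ + JᵀM = 0` with `M = [[0,1],[−1,0]]` and
the translational-invariance condition `∂f/∂x = 0`. -/
theorem uniform_motion_underconstrained
    (c₁ c₂ c₃ : ℝ → ℝ)
    (hc₁ : Differentiable ℝ c₁) (hc₂ : Differentiable ℝ c₂) (hc₃ : Differentiable ℝ c₃)
    (x p : ℝ → ℝ) (hx : Differentiable ℝ x) (hp : Differentiable ℝ p)
    (hdyn₁ : ∀ t, deriv x t = p t) (hdyn₂ : ∀ t, deriv p t = 0) :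
    ((∀ t, deriv (fun s => c₃ (p s)) t = 0) ∧
     (∀ t, deriv (fun s => c₁ (p s) * x s + c₂ (p s)) t = c₁ (p t) * p t) ∧
     (∃ v : ℝ, ∀ t, deriv (fun s => c₁ (p s) * x s + c₂ (p s)) t = v)) ∧
    (∀ A : ℝ → ℝ, Differentiable ℝ A →
      (∀ z : Fin 2 → ℝ,
        (!![0, 1; -1, 0] : Matrix (Fin 2) (Fin 2) ℝ) * jac2 (freeField A) z
          + (jac2 (freeField A) z)ᵀ * (!![0, 1; -1, 0] : Matrix (Fin 2) (Fin 2) ℝ) = 0) ∧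
      (∀ (z : Fin 2 → ℝ) (i : Fin 2),
        fderiv ℝ (fun w => freeField A w i) z (Pi.single 0 1) = 0)) := by
  have hpconst : ∀ t, p t = p 0 := fun t =>
    is_const_of_deriv_eq_zero hp hdyn₂ t 0
  have hx' : ∀ t, deriv (fun s => c₁ (p s) * x s + c₂ (p s)) t = c₁ (p t) * p t := by
    intro t
    have hfun : (fun s => c₁ (p s) * x s + c₂ (p s)) =
        fun s => c₁ (p 0) * x s + c₂ (p 0) := by
      funext s; rw [hpconst s]
    rw [hfun, hpconst t]
    rw [deriv_fun_add ((hx.const_mul _).differentiableAt) (differentiableAt_const _)]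
    simp [deriv_const_mul _ hx.differentiableAt, hdyn₁ t, hpconst t]
  refine ⟨⟨fun t => ?_, hx', ⟨c₁ (p 0) * p 0, fun t => by rw [hx' t, hpconst t]⟩⟩, ?_⟩
  · have hfun : (fun s => c₃ (p s)) = fun _ => c₃ (p 0) := by
      funext s; rw [hpconst s]
    rw [hfun, deriv_const]
  · intro A hA
    constructor
    · intro z
      rw [jac2_freeField A hA z]
      ext i j
      fin_cases i <;> fin_cases j <;>
        simp [Matrix.mul_apply, Fin.sum_univ_two, Matrix.transpose_apply,
          Matrix.vecHead, Matrix.vecTail]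
    · intro z i
      fin_cases i <;>
        simp [freeField, fderiv_comp_eval A hA]
end
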